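/- Let I ⊆ ℝ be an open interval, V : ℝ → ℝ, and E₀, E_n ∈ ℝ. Let ψ₀, ψ_n : ℝ → ℝ be twice differentiable on I, with ψ₀(x) ≠ 0 and ψ_n(x) ≠ 0 on I, satisfying -ψ₀'' + (V - E₀)·ψ₀ = 0 and -ψ_n'' + (V - E_n)·ψ_n = 0 on I. Set w₁(E₀) = ψ₀'/ψ₀ and w₁(E_n) = ψ_n'/ψ_n, and assume w₁(E₀)(x) ≠ w₁(E_n)(x) and -ψ_n'(x) + w₁(E₀)(x)·ψ_n(x) ≠ 0 on I. Then for all x ∈ I, the logarithmic derivative of ψ^{(1)}_n := -ψ_n' + (ψ₀'/ψ₀)·ψ_n satisfies (ψ^{(1)}_n)'(x)/ψ^{(1)}_n(x) = -w₁(E₀)(x) - (E₀ - E_n)/(w₁(E₀)(x) - w₁(E_n)(x)). -/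

import Mathlib

/-- **The logarithmic derivative of `A₁†(E₀)ψ_n` is given by the finite
difference formula.** Let `ψ₀`, `ψ_n` be nonvanishing twice differentiable
solutions of `-ψ'' + (V - E₀)ψ = 0` and `-ψ'' + (V - E_n)ψ = 0` on the open
interval `I`, with `w₁(E₀) = ψ₀'/ψ₀ ≠ ψ_n'/ψ_n = w₁(E_n)` and
`ψ_n^{(1)} = -ψ_n' + (ψ₀'/ψ₀)ψ_n` nonvanishing on `I`. Then on `I`
`(ψ_n^{(1)})'/ψ_n^{(1)} = -w₁(E₀) - (E₀ - E_n)/(w₁(E₀) - w₁(E_n))`. -/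
theorem log_deriv_intertwined_eigenfunction
    (I : Set ℝ) (hI : IsOpen I)
    (V : ℝ → ℝ) (E₀ En : ℝ)
    (ψ₀ ψ₀' ψ₀'' ψn ψn' ψn'' : ℝ → ℝ)
    (hψ₀ : ∀ x ∈ I, HasDerivAt ψ₀ (ψ₀' x) x)
    (hψ₀' : ∀ x ∈ I, HasDerivAt ψ₀' (ψ₀'' x) x)
    (hψn : ∀ x ∈ I, HasDerivAt ψn (ψn' x) x)
    (hψn' : ∀ x ∈ I, HasDerivAt ψn' (ψn'' x) x)
    (hψ₀0 : ∀ x ∈ I, ψ₀ x ≠ 0) (hψn0 : ∀ x ∈ I, ψn x ≠ 0)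
    (hS₀ : ∀ x ∈ I, -ψ₀'' x + (V x - E₀) * ψ₀ x = 0)
    (hSn : ∀ x ∈ I, -ψn'' x + (V x - En) * ψn x = 0)
    (hne : ∀ x ∈ I, ψ₀' x / ψ₀ x ≠ ψn' x / ψn x)
    (hA : ∀ x ∈ I, -ψn' x + (ψ₀' x / ψ₀ x) * ψn x ≠ 0) :
    ∀ x ∈ I,
      deriv (fun y => -ψn' y + (ψ₀' y / ψ₀ y) * ψn y) x
          / (-ψn' x + (ψ₀' x / ψ₀ x) * ψn x)
        = -(ψ₀' x / ψ₀ x)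
          - (E₀ - En) / (ψ₀' x / ψ₀ x - ψn' x / ψn x) := by
  intro x hx
  have h0 := hψ₀0 x hx
  have hn0 := hψn0 x hx
  have hd : HasDerivAt (fun y => -ψn' y + (ψ₀' y / ψ₀ y) * ψn y)
      (-ψn'' x + ((ψ₀'' x * ψ₀ x - ψ₀' x * ψ₀' x) / (ψ₀ x) ^ 2 * ψn x
        + (ψ₀' x / ψ₀ x) * ψn' x)) x := by
    exact ((hψn' x hx).neg).add
      ((((hψ₀' x hx).div (hψ₀ x hx) h0)).mul (hψn x hx))
  rw [hd.deriv]
  have e0 : ψ₀'' x = (V x - E₀) * ψ₀ x := by linarith [hS₀ x hx]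
  have en : ψn'' x = (V x - En) * ψn x := by linarith [hSn x hx]
  have hsub : ψ₀' x / ψ₀ x - ψn' x / ψn x ≠ 0 := sub_ne_zero.mpr (hne x hx)
  have hAx := hA x hx
  rw [e0, en, div_eq_iff hAx]
  field_simp
  ring_nf
  ring_nf at hsub
  field_simp at hsub
  have key : ψn x * ψ₀' x - ψ₀ x * ψn' x ≠ 0 := by
    intro h; apply hsub; rw [div_eq_zero_iff]; left; linarith
  field_simp [key]
  ring
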